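/- Every matroidal ideal in a skew polynomial ring has linear quotients with respect to the reverse lexicographic order on its minimal generators, and its decomposition function is regular. -/
import Mathlib


open Finset

/-- `IsDecomp u a j` : `g(x^a) = x^(u j)`, i.e. `u j` `*`-divides `a` and `j` is minimal
with this property. -/
def IsDecomp {n m : ℕ} (u : Fin m → (Fin n → ℕ)) (a : Fin n → ℕ) (j : Fin m) : Prop :=
  (∃ c, a = u j + c) ∧ ∀ i : Fin m, i < j → ¬ ∃ c, a = u i + c

/-- Reverse lexicographic comparison on exponent vectors: `a <_rlex b` iff at the last
position where they differ, `a` has the larger exponent. -/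
def rlexLT {n : ℕ} (a b : Fin n → ℕ) : Prop :=
  ∃ t, b t < a t ∧ ∀ s, t < s → a s = b s

lemma dvd_iff' {n : ℕ} (a b : Fin n → ℕ) : (∃ c, a = b + c) ↔ ∀ t, b t ≤ a t := by
  constructor
  · rintro ⟨c, rfl⟩ t; simp
  · intro h
    exact ⟨a - b, funext fun t => by have := h t; simp [Pi.sub_apply]; omega⟩

lemma rlex_asymm {n : ℕ} {a b : Fin n → ℕ} (h1 : rlexLT a b) (h2 : rlexLT b a) : False := by
  obtain ⟨t1, ht1, he1⟩ := h1
  obtain ⟨t2, ht2, he2⟩ := h2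
  rcases lt_trichotomy t1 t2 with h | h | h
  · have := he1 t2 h; omega
  · subst h; omega
  · have := he2 t1 h; omega

lemma aux_exch {n m : ℕ} (u : Fin m → (Fin n → ℕ))
    (hsqf : ∀ (j : Fin m) (i : Fin n), u j i ≤ 1)
    (hexch : ∀ (a b : Fin m) (i : Fin n), u b i < u a i →
      ∃ j : Fin n, u a j < u b j ∧ ∃ c : Fin m, Pi.single j 1 + (u a - Pi.single i 1) = u c) :
    ∀ (a b : Fin m) (i : Fin n), u b i < u a i →
    ∃ s : Fin n, s ≠ i ∧ u a s = 0 ∧ u b s = 1 ∧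
      ∃ c : Fin m, ∀ p, u c p = if p = s then 1 else if p = i then 0 else u a p := by
  intro a b i hi
  obtain ⟨s, hs, c, hc⟩ := hexch a b i hi
  have hbs1 : u b s ≤ 1 := hsqf b s
  have has : u a s = 0 := by omega
  have hbs : u b s = 1 := by omega
  have hai : 1 ≤ u a i := by omega
  have hai1 : u a i ≤ 1 := hsqf a i
  have hsi : s ≠ i := by intro h; subst h; omega
  refine ⟨s, hsi, has, hbs, c, fun p => ?_⟩
  have hp := congrFun hc p
  simp only [Pi.add_apply, Pi.sub_apply, Pi.single_apply] at hp
  rcases eq_or_ne p s with hps | hps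
  · subst hps
    simp [hsi, has] at hp
    simp [← hp]
  · rcases eq_or_ne p i with hpi | hpi
    · subst hpi
      simp [hps] at hp
      simp [hps, ← hp]
      omega
    · simp [hps, hpi] at hp
      simp [hps, hpi, ← hp]

lemma aux_idx {n m : ℕ} (u : Fin m → (Fin n → ℕ))
    (horder : ∀ i j : Fin m, i < j → rlexLT (u j) (u i)) :
    ∀ i j : Fin m, rlexLT (u j) (u i) → i < j := by
  intro i j h
  rcases lt_trichotomy i j with hl | hl | hl
  · exact hl
  · subst hl; obtain ⟨t, ht, _⟩ := h; omega
  · exact absurd (horder j i hl) (fun h2 => rlex_asymm h h2)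

lemma aux_lq {n m : ℕ} (u : Fin m → (Fin n → ℕ))
    (horder : ∀ i j : Fin m, i < j → rlexLT (u j) (u i))
    (hexch' : ∀ (a b : Fin m) (i : Fin n), u b i < u a i →
      ∃ s : Fin n, s ≠ i ∧ u a s = 0 ∧ u b s = 1 ∧
        ∃ c : Fin m, ∀ p, u c p = if p = s then 1 else if p = i then 0 else u a p)
    (hidx : ∀ i j : Fin m, rlexLT (u j) (u i) → i < j) :
    ∀ (i j : Fin m), i < j → ∀ w : Fin n → ℕ, (∀ t, u i t ≤ w t + u j t) →
    ∃ s, 1 ≤ w s ∧ ∃ c, c < j ∧ ∀ t, u c t ≤ (Pi.single s 1 + u j : Fin n → ℕ) t := by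
  intro i j hij w hw
  obtain ⟨t0, ht0, he0⟩ := horder i j hij
  obtain ⟨s, hsne, hjs0, his1, c, hc⟩ := hexch' j i t0 ht0
  have hws : 1 ≤ w s := by have := hw s; omega
  have hst0 : s < t0 := by
    rcases lt_trichotomy s t0 with h | h | h
    · exact h
    · exfalso; subst h; omega
    · exfalso; have := he0 s h; omega
  refine ⟨s, hws, c, hidx c j ⟨t0, ?_, ?_⟩, fun q => ?_⟩
  · rw [hc t0]; simp [Ne.symm hsne]; omega
  · intro y hy
    rw [hc y]
    simp [(hst0.trans hy).ne', hy.ne']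
  · rw [hc q]
    simp only [Pi.add_apply, Pi.single_apply]
    split_ifs with h1 h2 <;> omega

lemma aux_struct {n m : ℕ} (u : Fin m → (Fin n → ℕ))
    (hsqf : ∀ (j : Fin m) (i : Fin n), u j i ≤ 1)
    (hdeg : ∀ i j : Fin m, (∑ t, u i t) = ∑ t, u j t)
    (hinj : Function.Injective u)
    (s : Fin n) (i j : Fin m) (hne : i ≠ j)
    (hle : ∀ t, u i t ≤ (Pi.single s 1 + u j : Fin n → ℕ) t) :
    ∃ t, t ≠ s ∧ u j t = 1 ∧ u j s = 0 ∧
      (∀ p, u i p = if p = s then 1 else if p = t then 0 else u j p) := by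
  set f : Fin n → ℕ := Pi.single s 1 + u j with hf
  have hsum1 : (∑ p, Pi.single s (1:ℕ) p) = 1 := by
    simp [Pi.single_apply]
  have hsumf : (∑ p, f p) = 1 + ∑ p, u j p := by
    simp [hf, Finset.sum_add_distrib, hsum1]
  have hsumi : (∑ p, u i p) = ∑ p, u j p := hdeg i j
  have hex : ∃ t, u i t < f t := by
    by_contra hc
    push_neg at hc
    have : (∑ p, f p) ≤ ∑ p, u i p := Finset.sum_le_sum (fun p _ => hc p)
    simp only [hsumf, hsumi] at this
    omega
  obtain ⟨t, ht⟩ := hex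
  have hmem : t ∈ (Finset.univ : Finset (Fin n)) := Finset.mem_univ t
  have e1 : u i t + ∑ p ∈ univ.erase t, u i p = ∑ p, u i p := Finset.add_sum_erase _ _ hmem
  have e2 : f t + ∑ p ∈ univ.erase t, f p = ∑ p, f p := Finset.add_sum_erase _ _ hmem
  have hle' : ∑ p ∈ univ.erase t, u i p ≤ ∑ p ∈ univ.erase t, f p :=
    Finset.sum_le_sum (fun p _ => hle p)
  have hft : f t = u i t + 1 := by omega
  have hesum : ∑ p ∈ univ.erase t, u i p = ∑ p ∈ univ.erase t, f p := by omega
  have hpt : ∀ p ∈ univ.erase t, u i p = f p :=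
    (Finset.sum_eq_sum_iff_of_le (fun p _ => hle p)).mp hesum
  have hpt' : ∀ p, p ≠ t → u i p = f p := fun p hp =>
    hpt p (Finset.mem_erase.mpr ⟨hp, Finset.mem_univ p⟩)
  have hts : t ≠ s := by
    intro h; subst h
    apply hne
    apply hinj
    funext p
    by_cases hp : p = t
    · subst hp
      have : f p = 1 + u j p := by simp [hf, Pi.single_apply]
      have h2 := hsqf i p
      omega
    · have := hpt' p hp
      have : u i p = u j p := by simpa [hf, Pi.single_apply, hp] using this
      exact this
  have hfs : f s = 1 + u j s := by simp [hf]
  have hft' : f t = u j t := by simp [hf, Pi.single_apply, hts]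
  have hut : u j t = 1 := by have := hsqf j t; omega
  have his : u i s = 1 + u j s := by
    have := hpt' s (Ne.symm hts); omega
  have hjs : u j s = 0 := by have := hsqf i s; omega
  refine ⟨t, hts, hut, hjs, fun p => ?_⟩
  by_cases hps : p = s
  · subst hps; simp [his, hjs]
  · by_cases hptq : p = t
    · subst hptq; simp [hps]; omega
    · have := hpt' p hptq
      simp [hf, Pi.single_apply, hps] at this
      simp [hps, hptq, this]

lemma aux_reg {n m : ℕ} (u : Fin m → (Fin n → ℕ))
    (hsqf : ∀ (j : Fin m) (i : Fin n), u j i ≤ 1)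
    (hdeg : ∀ i j : Fin m, (∑ t, u i t) = ∑ t, u j t)
    (hinj : Function.Injective u)
    (horder : ∀ i j : Fin m, i < j → rlexLT (u j) (u i))
    (hexch' : ∀ (a b : Fin m) (i : Fin n), u b i < u a i →
      ∃ s : Fin n, s ≠ i ∧ u a s = 0 ∧ u b s = 1 ∧
        ∃ c : Fin m, ∀ p, u c p = if p = s then 1 else if p = i then 0 else u a p)
    (hidx : ∀ i j : Fin m, rlexLT (u j) (u i) → i < j)
    (j : Fin m) (s : Fin n)
    (hs : ∃ i, i < j ∧ ∀ t, u i t ≤ (Pi.single s 1 + u j : Fin n → ℕ) t)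
    (j' : Fin m)
    (hdiv : ∀ t, u j' t ≤ (Pi.single s 1 + u j : Fin n → ℕ) t)
    (hmin : ∀ i : Fin m, i < j' → ¬ ∀ t, u i t ≤ (Pi.single s 1 + u j : Fin n → ℕ) t)
    (r : Fin n)
    (hr : ∃ i', i' < j' ∧ ∀ t, u i' t ≤ (Pi.single r 1 + u j' : Fin n → ℕ) t) :
    ∃ i, i < j ∧ ∀ t, u i t ≤ (Pi.single r 1 + u j : Fin n → ℕ) t := by
  obtain ⟨i0, hi0j, hi0le⟩ := hs
  have hj'j : j' < j := by
    have hni : ¬ i0 < j' := fun h => hmin i0 h hi0le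
    exact lt_of_le_of_lt (not_lt.mp hni) hi0j
  obtain ⟨t, hts, hjt1, hjs0, hj'pat⟩ := aux_struct u hsqf hdeg hinj s j' j hj'j.ne hdiv
  obtain ⟨i', hi'j', hi'le⟩ := hr
  rcases eq_or_ne r s with hrs | hrs
  · subst hrs; exact ⟨i0, hi0j, hi0le⟩
  obtain ⟨p, hpr, hj'p1, hj'r0, hi'pat⟩ := aux_struct u hsqf hdeg hinj r i' j' hi'j'.ne hi'le
  have hi'j : i' < j := hi'j'.trans hj'j
  have hj's1 : u j' s = 1 := by rw [hj'pat s]; simp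
  have hj't0 : u j' t = 0 := by rw [hj'pat t]; simp [hts]
  -- r ≠ t
  have hrt : r ≠ t := by
    intro h
    subst h
    rcases eq_or_ne p s with hps | hps
    · have heq : u i' = u j := by
        funext x
        rw [hi'pat x]
        rcases eq_or_ne x r with h1 | h1
        · simp [h1, hjt1]
        · rcases eq_or_ne x s with h2 | h2
          · simp [h1, h2, hps, hjs0, Ne.symm hts]
          · simp [h1, h2, hps]
            rw [hj'pat x]
            simp [h1, h2]
      exact absurd (hinj heq) hi'j.ne
    · have hpt2 : p ≠ r := hpr
      have hjp1 : u j p = 1 := by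
        have h1 := hj'pat p
        rw [hj'p1] at h1
        simp [hps, hpt2] at h1
        omega
      refine hmin i' hi'j' (fun x => ?_)
      rw [hi'pat x]
      simp only [Pi.add_apply, Pi.single_apply]
      rcases eq_or_ne x r with h1 | h1
      · simp [h1, hjt1, Ne.symm hts]
      · rcases eq_or_ne x p with h2 | h2
        · simp [h1, h2, hpr]
        · simp [h1, h2]
          rw [hj'pat x]
          split_ifs <;> omega
  have hjr0 : u j r = 0 := by
    have h1 := hj'pat r
    rw [hj'r0] at h1
    simp [hrs, hrt] at h1
    omega
  rcases eq_or_ne p s with hps | hps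
  · -- p = s: i' itself works
    refine ⟨i', hi'j, fun q => ?_⟩
    rw [hi'pat q]
    simp only [Pi.add_apply, Pi.single_apply]
    rcases eq_or_ne q r with h1 | h1
    · simp [h1]
    · rcases eq_or_ne q p with h2 | h2
      · simp [h1, h2]
      · simp [h1, h2]
        rw [hj'pat q]
        rcases eq_or_ne q s with h3 | h3
        · exact absurd (h3.trans hps.symm) h2
        · simp [h3]
          split_ifs <;> omega
  · -- p ≠ s
    have hpt : p ≠ t := by
      intro h; rw [h, hj't0] at hj'p1; omega
    have hjp1 : u j p = 1 := by
      have h1 := hj'pat p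
      rw [hj'p1] at h1
      simp [hps, hpt] at h1
      omega
    have vi' : ∀ z, u i' z =
        if z = r then 1 else if z = p then 0 else if z = s then 1 else if z = t then 0 else u j z := by
      intro z
      rw [hi'pat z]
      rcases eq_or_ne z r with h1 | h1
      · simp [h1, Ne.symm hpr]
      · rcases eq_or_ne z p with h2 | h2
        · simp [h1, h2]
        · simp [h1, h2]
          exact hj'pat z
    have hi's1 : u i' s = 1 := by rw [vi' s]; simp [Ne.symm hrs, Ne.symm hps]
    -- r < p
    have hrp : r < p := by
      obtain ⟨x, hx, hxe⟩ := horder i' j' hi'j'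
      have hxp : x = p := by
        by_contra hxp
        rw [hi'pat x] at hx
        rcases eq_or_ne x r with h1 | h1
        · rw [h1, hj'r0] at hx; simp at hx
        · simp [h1, hxp] at hx
      subst hxp
      rcases lt_trichotomy r x with h1 | h1 | h1
      · exact h1
      · exact absurd h1.symm hpr
      · exfalso
        have h2 := hxe r h1
        rw [hi'pat r] at h2
        simp at h2
        rw [hj'r0] at h2
        omega
    -- exchange at s
    have hex1 : u j s < u i' s := by rw [hjs0, hi's1]; omega
    obtain ⟨q, hqs, hi'q0, hjq1, c, hc⟩ := hexch' i' j s hex1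
    have hq : q = p ∨ q = t := by
      by_contra hcon
      push_neg at hcon
      obtain ⟨h1, h2⟩ := hcon
      rw [vi' q] at hi'q0
      rcases eq_or_ne q r with h3 | h3
      · simp [h3] at hi'q0
      · simp [h3, h1, hqs, h2] at hi'q0
        rw [hi'q0] at hjq1; omega
    rcases hq with hq | hq
    · -- q = p
      rw [hq] at hc hi'q0 hjq1
      rcases lt_trichotomy r t with hlt | heq | hgt
      · -- r < t : u c = u j + e_r - e_t works
        have vc : ∀ x, u c x = if x = r then 1 else if x = t then 0 else u j x := by
          intro x
          rw [hc x]
          rcases eq_or_ne x p with h1 | h1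
          · simp [h1, hpr, hpt, hjp1]
          · rcases eq_or_ne x s with h2 | h2
            · simp [h1, h2, Ne.symm hrs, Ne.symm hts, Ne.symm hps, hjs0]
            · simp [h1, h2]
              rw [vi' x]
              simp [h1, h2]
        refine ⟨c, hidx c j ⟨t, ?_, ?_⟩, fun x => ?_⟩
        · rw [vc t]; simp [Ne.symm hrt, hjt1]
        · intro y hy
          rw [vc y]
          simp [hy.ne', (hlt.trans hy).ne']
        · rw [vc x]
          simp only [Pi.add_apply, Pi.single_apply]
          split_ifs <;> omega
      · exact absurd heq hrt
      · -- t < r : second exchange at p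
        have hex2 : u i' p < u j p := by rw [hi'q0, hjq1]; omega
        obtain ⟨y, hyp, hjy0, hi'y1, c2, hc2⟩ := hexch' j i' p hex2
        have hy : y = s ∨ y = r := by
          by_contra hcon
          push_neg at hcon
          obtain ⟨h1, h2⟩ := hcon
          rw [vi' y] at hi'y1
          rcases eq_or_ne y t with h3 | h3
          · simp [h3, h2, hyp, h1, Ne.symm hrt, Ne.symm hpt, hts] at hi'y1
          · simp [h2, hyp, h1, h3] at hi'y1
            rw [hi'y1] at hjy0; omega
        rcases hy with hy | hy
        · -- y = s : contradiction with minimality of j'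
          exfalso
          rw [hy] at hc2
          have hdivc2 : ∀ x, u c2 x ≤ (Pi.single s 1 + u j : Fin n → ℕ) x := by
            intro x
            rw [hc2 x]
            simp only [Pi.add_apply, Pi.single_apply]
            split_ifs <;> omega
          have hc2j' : c2 ≠ j' := by
            intro h
            have h1 := hc2 p
            rw [h, hj'p1] at h1
            simp [hps] at h1
          have hj'c2 : j' < c2 :=
            (not_lt.mp (fun h => hmin c2 h hdivc2 : ¬ c2 < j')).lt_of_ne
              (fun h => hc2j' h.symm)
          obtain ⟨x, hx, hxe⟩ := horder j' c2 hj'c2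
          have hxt : x = t := by
            by_contra hxt
            rw [hc2 x, hj'pat x] at hx
            rcases eq_or_ne x s with h1 | h1
            · simp [h1] at hx
            · rcases eq_or_ne x p with h2 | h2
              · simp [h1, h2, hps, hpt] at hx
              · simp [h1, h2, hxt] at hx
          rw [hxt] at hxe
          have h2 := hxe p (hgt.trans hrp)
          rw [hc2 p, hj'pat p] at h2
          simp [hps, hpt] at h2
          omega
        · -- y = r : c2 works
          rw [hy] at hc2
          refine ⟨c2, hidx c2 j ⟨p, ?_, ?_⟩, fun x => ?_⟩
          · rw [hc2 p]; simp [hpr, hjp1]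
          · intro z hz
            rw [hc2 z]
            simp [hz.ne', (hrp.trans hz).ne']
          · rw [hc2 x]
            simp only [Pi.add_apply, Pi.single_apply]
            split_ifs <;> omega
    · -- q = t : u c = u j + e_r - e_p works
      rw [hq] at hc hi'q0 hjq1
      have vc : ∀ x, u c x = if x = r then 1 else if x = p then 0 else u j x := by
        intro x
        rw [hc x]
        rcases eq_or_ne x t with h1 | h1
        · simp [h1, Ne.symm hrt, Ne.symm hpt, hjt1]
        · rcases eq_or_ne x s with h2 | h2
          · simp [h1, h2, Ne.symm hrs, Ne.symm hps, Ne.symm hts, hjs0]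
          · simp [h1, h2]
            rw [vi' x]
            simp [h1, h2]
      refine ⟨c, hidx c j ⟨p, ?_, ?_⟩, fun x => ?_⟩
      · rw [vc p]; simp [hpr, hjp1]
      · intro y hy
        rw [vc y]
        simp [hy.ne', (hrp.trans hy).ne']
      · rw [vc x]
        simp only [Pi.add_apply, Pi.single_apply]
        split_ifs <;> omega

/-- a matroidal ideal, with minimal generators `x^(u 0), …, x^(u (m-1))`
listed in (descending) reverse lexicographic order, has linear quotients, and its
decomposition function is regular. -/
theorem matroidal_linear_quotients_regular {n m : ℕ} (u : Fin m → (Fin n → ℕ))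
    (hsqf : ∀ (j : Fin m) (i : Fin n), u j i ≤ 1)
    (hdeg : ∀ i j : Fin m, (∑ t, u i t) = ∑ t, u j t)
    (hinj : Function.Injective u)
    (hexch : ∀ (a b : Fin m) (i : Fin n), u b i < u a i →
      ∃ j : Fin n, u a j < u b j ∧ ∃ c : Fin m, Pi.single j 1 + (u a - Pi.single i 1) = u c)
    (horder : ∀ i j : Fin m, i < j → rlexLT (u j) (u i)) :
    ∃ setu : Fin m → Finset (Fin n),
      (∀ (j : Fin m) (w : Fin n → ℕ),
        (∃ i : Fin m, i < j ∧ ∃ c, w + u j = u i + c) ↔ ∃ s ∈ setu j, 1 ≤ w s) ∧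
      (∀ (j : Fin m), ∀ s ∈ setu j, ∀ j' : Fin m,
        IsDecomp u (Pi.single s 1 + u j) j' → setu j' ⊆ setu j) := by
  classical
  have hexch2 := aux_exch u hsqf hexch
  have hidx := aux_idx u horder
  refine ⟨fun j => univ.filter
      (fun s => ∃ i, i < j ∧ ∀ t, u i t ≤ (Pi.single s 1 + u j : Fin n → ℕ) t),
    fun j w => ?_, fun j s hs j' hdec => ?_⟩
  · constructor
    · rintro ⟨i, hij, hc⟩
      have hc' : ∀ t, u i t ≤ w t + u j t := by
        have h1 := (dvd_iff' (w + u j) (u i)).mp hc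
        intro t; simpa using h1 t
      obtain ⟨s, hws, c, hcj, hcle⟩ := aux_lq u horder hexch2 hidx i j hij w hc'
      exact ⟨s, Finset.mem_filter.mpr ⟨Finset.mem_univ s, c, hcj, hcle⟩, hws⟩
    · rintro ⟨s, hsmem, hws⟩
      obtain ⟨-, i, hij, hle⟩ := Finset.mem_filter.mp hsmem
      refine ⟨i, hij, (dvd_iff' _ _).mpr fun t => ?_⟩
      have h1 := hle t
      simp only [Pi.add_apply, Pi.single_apply] at h1 ⊢
      rcases eq_or_ne t s with h2 | h2
      · have h3 := hsqf i t
        rw [h2] at h3 ⊢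
        omega
      · simp [h2] at h1; omega
  · obtain ⟨-, hs'⟩ := Finset.mem_filter.mp hs
    obtain ⟨hdiv, hmin⟩ := hdec
    have hdiv' : ∀ t, u j' t ≤ (Pi.single s 1 + u j : Fin n → ℕ) t :=
      (dvd_iff' _ _).mp hdiv
    have hmin' : ∀ i : Fin m, i < j' → ¬ ∀ t, u i t ≤ (Pi.single s 1 + u j : Fin n → ℕ) t :=
      fun i hi hcc => hmin i hi ((dvd_iff' _ _).mpr hcc)
    intro r hrmem
    obtain ⟨-, i', hi'j', hi'le⟩ := Finset.mem_filter.mp hrmem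
    exact Finset.mem_filter.mpr ⟨Finset.mem_univ r,
      aux_reg u hsqf hdeg hinj horder hexch2 hidx j s hs' j' hdiv' hmin' r ⟨i', hi'j', hi'le⟩⟩
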